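/- For any positive semidefinite matrix X with operator norm ‖X‖ and any T > 0 and β ∈ (0,1), the operator inequality ∫_T^∞ t^β ( (1/t)·I − (tI + X)^{-1} ) dt ≤ ( ‖X‖ / ((1−β)·T^{1−β}) )·I holds. -/

import Mathlib

open Matrix
open scoped ComplexOrder

attribute [local instance] Matrix.frobeniusNormedAddCommGroup Matrix.frobeniusNormedSpace

/-- `(1/t)·I − (tI + X)⁻¹`. -/
noncomputable def resolventGap {n : ℕ} (t : ℝ) (X : Matrix (Fin n) (Fin n) ℂ) :
    Matrix (Fin n) (Fin n) ℂ :=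
  (1 / t : ℝ) • (1 : Matrix (Fin n) (Fin n) ℂ) - (t • (1 : Matrix (Fin n) (Fin n) ℂ) + X)⁻¹

section Aux

open MeasureTheory Set

lemma aux_nonneg_bound {T β l t : ℝ} (hT : 0 < T) (hl : 0 ≤ l) (ht : t ∈ Set.Ioi T) :
    0 ≤ t ^ β * (1 / t - 1 / (t + l)) ∧ t ^ β * (1 / t - 1 / (t + l)) ≤ l * t ^ (β - 2) := by
  have ht0 : 0 < t := hT.trans ht
  have htl : 0 < t + l := by linarith
  have hdiff : 1 / t - 1 / (t + l) = l / (t * (t + l)) := by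
    field_simp
    ring
  constructor
  · rw [hdiff]
    positivity
  · rw [hdiff]
    have h1 : l / (t * (t + l)) ≤ l / (t * t) := by
      apply div_le_div_of_nonneg_left hl (by positivity)
      nlinarith
    have h2 : t ^ β * (l / (t * t)) = l * t ^ (β - 2) := by
      rw [Real.rpow_sub ht0, show (2:ℝ) = ((2:ℕ):ℝ) by norm_num, Real.rpow_natCast]
      field_simp
    calc t ^ β * (l / (t * (t + l))) ≤ t ^ β * (l / (t * t)) := by
          apply mul_le_mul_of_nonneg_left h1 (Real.rpow_nonneg ht0.le β)
      _ = l * t ^ (β - 2) := h2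

lemma aux_integrable {T β l : ℝ} (hT : 0 < T) (hβ1 : β < 1) (hl : 0 ≤ l) :
    IntegrableOn (fun t : ℝ => t ^ β * (1 / t - 1 / (t + l))) (Set.Ioi T) := by
  have hdom : IntegrableOn (fun t : ℝ => l * t ^ (β - 2)) (Set.Ioi T) :=
    (integrableOn_Ioi_rpow_of_lt (by linarith) hT).const_mul l
  refine hdom.mono' ?_ ?_
  · refine (ContinuousOn.mul ?_ (ContinuousOn.sub ?_ ?_)).aestronglyMeasurable measurableSet_Ioi
    · exact continuousOn_id.rpow_const fun t ht => Or.inl (ne_of_gt (hT.trans ht))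
    · exact continuousOn_const.div continuousOn_id fun t ht => ne_of_gt (hT.trans ht)
    · exact continuousOn_const.div (continuousOn_id.add continuousOn_const)
        fun t ht => by have := hT.trans ht; dsimp; linarith
  · filter_upwards [ae_restrict_mem measurableSet_Ioi] with t ht
    have h := aux_nonneg_bound (β := β) hT hl ht
    rw [Real.norm_eq_abs, abs_of_nonneg h.1]
    exact h.2

lemma aux_integral_le {T β l K : ℝ} (hT : 0 < T) (hβ0 : 0 < β) (hβ1 : β < 1)
    (hl : 0 ≤ l) (hlK : l ≤ K) :
    ∫ t in Set.Ioi T, t ^ β * (1 / t - 1 / (t + l)) ≤ K / ((1 - β) * T ^ (1 - β)) := by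
  have hdom : IntegrableOn (fun t : ℝ => K * t ^ (β - 2)) (Set.Ioi T) :=
    (integrableOn_Ioi_rpow_of_lt (by linarith) hT).const_mul K
  have h1 : ∫ t in Set.Ioi T, t ^ β * (1 / t - 1 / (t + l)) ≤ ∫ t in Set.Ioi T, K * t ^ (β - 2) := by
    refine setIntegral_mono_on (aux_integrable hT hβ1 hl) hdom measurableSet_Ioi fun t ht => ?_
    have h := aux_nonneg_bound (β := β) hT hl ht
    refine h.2.trans ?_
    have : 0 < t := hT.trans ht
    exact mul_le_mul_of_nonneg_right hlK (Real.rpow_nonneg this.le _)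
  refine h1.trans ?_
  rw [MeasureTheory.integral_const_mul, integral_Ioi_rpow_of_lt (by linarith) hT]
  have hpow : T ^ (β - 2 + 1) * T ^ (1 - β) = 1 := by
    rw [← Real.rpow_add hT, show β - 2 + 1 + (1 - β) = 0 by ring, Real.rpow_zero]
  have hKnn : 0 ≤ K := hl.trans hlK
  have hne : T ^ (1 - β) ≠ 0 := ne_of_gt (Real.rpow_pos_of_pos hT _)
  have hb : β - 2 + 1 ≠ 0 := by linarith
  have heq : K * (-T ^ (β - 2 + 1) / (β - 2 + 1)) = K / ((1 - β) * T ^ (1 - β)) := by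
    rw [eq_div_iff (mul_ne_zero (by linarith : (1:ℝ) - β ≠ 0) hne)]
    field_simp
    linear_combination K * (β - 1) * hpow
  exact le_of_eq heq

lemma real_smul_matrix {n : ℕ} (r : ℝ) (M : Matrix (Fin n) (Fin n) ℂ) :
    r • M = (r : ℂ) • M := by
  ext i j
  simp [Complex.real_smul]

lemma diag_eq_sum {n : ℕ} (d : Fin n → ℂ) :
    diagonal d = ∑ i, d i • single i i (1 : ℂ) := by
  ext j k
  rcases eq_or_ne j k with h | h
  · subst h; simp [Matrix.sum_apply, diagonal_apply, single_apply_of_ne,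
      Finset.sum_ite_eq, single]
  · simp only [Matrix.sum_apply, diagonal_apply_ne _ h, Matrix.smul_apply, single,
      Matrix.of_apply, smul_eq_mul, mul_ite, mul_one, mul_zero]
    refine (Finset.sum_eq_zero fun x _ => ?_).symm
    rw [if_neg]
    rintro ⟨rfl, rfl⟩
    exact h rfl

lemma conj_diag_sum {n : ℕ} (U : Matrix (Fin n) (Fin n) ℂ) (d : Fin n → ℂ) :
    U * diagonal d * star U = ∑ i, d i • (U * single i i 1 * star U) := by
  rw [diag_eq_sum, Finset.mul_sum, Finset.sum_mul]
  refine Finset.sum_congr rfl fun i _ => ?_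
  rw [← smul_mul_assoc, ← mul_smul_comm, smul_single, smul_eq_mul, mul_one]

end Aux

/-- For a positive semidefinite `X`, `T > 0` and `β ∈ (0,1)`, the Loewner-order inequality
`∫_T^∞ t^β ( (1/t)·I − (tI + X)⁻¹ ) dt ≤ ( ‖X‖ / ((1−β)·T^{1−β}) )·I` holds, where `‖X‖` is
the operator norm of `X`. -/
theorem stmt_8 {n : ℕ} (X : Matrix (Fin n) (Fin n) ℂ) (hX : X.PosSemidef)
    (T β : ℝ) (hT : 0 < T) (hβ : β ∈ Set.Ioo (0 : ℝ) 1) :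
    ((‖Matrix.toEuclideanCLM (𝕜 := ℂ) X‖ / ((1 - β) * T ^ (1 - β))) •
        (1 : Matrix (Fin n) (Fin n) ℂ) -
      ∫ t in Set.Ioi T, t ^ β • resolventGap t X).PosSemidef := by
  obtain ⟨hβ0, hβ1⟩ := hβ
  have hHerm := hX.1
  set K : ℝ := ‖Matrix.toEuclideanCLM (𝕜 := ℂ) X‖ with hKdef
  set U : Matrix (Fin n) (Fin n) ℂ := (hHerm.eigenvectorUnitary : Matrix (Fin n) (Fin n) ℂ) with hUdef
  set ev : Fin n → ℝ := hHerm.eigenvalues with hevdef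
  have hU1 : U * star U = 1 := Matrix.mem_unitaryGroup_iff.mp hHerm.eigenvectorUnitary.2
  have hU2 : star U * U = 1 := Matrix.mem_unitaryGroup_iff'.mp hHerm.eigenvectorUnitary.2
  have hev0 : ∀ i, 0 ≤ ev i := fun i => hX.eigenvalues_nonneg i
  -- eigenvalues are bounded by the operator norm
  have hevK : ∀ i, ev i ≤ K := by
    intro i
    set v := hHerm.eigenvectorBasis i with hv
    have hnv : ‖v‖ = 1 := hHerm.eigenvectorBasis.orthonormal.1 i
    have happ : Matrix.toEuclideanCLM (𝕜 := ℂ) X v = (ev i : ℝ) • v := by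
      apply (WithLp.equiv 2 (Fin n → ℂ)).injective
      show WithLp.ofLp (Matrix.toEuclideanCLM (𝕜 := ℂ) X v) = WithLp.ofLp ((ev i : ℝ) • v)
      rw [Matrix.ofLp_toEuclideanCLM]
      exact hHerm.mulVec_eigenvectorBasis i
    have h1 := (Matrix.toEuclideanCLM (𝕜 := ℂ) X).le_opNorm v
    rw [hnv, mul_one, happ, norm_smul, hnv, mul_one, Real.norm_eq_abs] at h1
    exact (le_abs_self _).trans h1
  set E : Fin n → Matrix (Fin n) (Fin n) ℂ := fun i => U * single i i 1 * star U
    with hEdef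
  set s : Fin n → ℝ → ℝ := fun i t => t ^ β * (1 / t - 1 / (t + ev i)) with hsdef
  have hconst : ∀ r : ℝ, r • (1 : Matrix (Fin n) (Fin n) ℂ)
      = U * diagonal (fun _ => (r : ℂ)) * star U := by
    intro r
    rw [real_smul_matrix, ← smul_one_eq_diagonal, mul_smul_comm, smul_mul_assoc, mul_one, hU1]
  have key : Set.EqOn (fun t => t ^ β • resolventGap t X)
      (fun t => ∑ i, ((s i t : ℝ) : ℂ) • E i) (Set.Ioi T) := by
    intro t ht
    have ht0 : 0 < t := hT.trans ht
    have hti : ∀ i, (0:ℝ) < t + ev i := fun i => by have := hev0 i; linarith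
    have hA : t • (1 : Matrix (Fin n) (Fin n) ℂ) + X
        = U * diagonal (fun i => ((t + ev i : ℝ) : ℂ)) * star U := by
      have hd : (diagonal (fun i => ((t + ev i : ℝ) : ℂ)) : Matrix (Fin n) (Fin n) ℂ)
          = diagonal (fun _ => (t : ℂ)) + diagonal (RCLike.ofReal ∘ ev) := by
        rw [diagonal_add]
        refine congrArg diagonal (funext fun i => ?_)
        show ((t + ev i : ℝ) : ℂ) = (t : ℂ) + ((ev i : ℝ) : ℂ)
        push_cast
        ring
      rw [hd, mul_add, add_mul, ← hconst t, hUdef, hevdef, ← Unitary.conjStarAlgAut_apply (S := ℂ),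
        ← hHerm.spectral_theorem]
    have hAinv : (t • (1 : Matrix (Fin n) (Fin n) ℂ) + X)⁻¹
        = U * diagonal (fun i => (((t + ev i : ℝ) : ℂ))⁻¹) * star U := by
      rw [hA]
      apply Matrix.inv_eq_right_inv
      calc U * diagonal (fun i => ((t + ev i : ℝ) : ℂ)) * star U *
            (U * diagonal (fun i => (((t + ev i : ℝ) : ℂ))⁻¹) * star U)
          = U * (diagonal (fun i => ((t + ev i : ℝ) : ℂ)) * (star U * U) *
              diagonal (fun i => (((t + ev i : ℝ) : ℂ))⁻¹)) * star U := by
            simp only [Matrix.mul_assoc]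
        _ = 1 := by
            rw [hU2, mul_one, diagonal_mul_diagonal]
            have hone : (fun i => ((t + ev i : ℝ) : ℂ) * (((t + ev i : ℝ) : ℂ))⁻¹)
                = fun _ => (1 : ℂ) := by
              funext i
              exact mul_inv_cancel₀ (by exact_mod_cast (hti i).ne')
            rw [hone, diagonal_one, mul_one, hU1]
    have hgap : resolventGap t X
        = U * diagonal (fun i => ((1 / t : ℝ) : ℂ) - (((t + ev i : ℝ) : ℂ))⁻¹) * star U := by
      have hdsub : (diagonal (fun i => ((1 / t : ℝ) : ℂ) - (((t + ev i : ℝ) : ℂ))⁻¹) :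
            Matrix (Fin n) (Fin n) ℂ)
          = diagonal (fun _ => ((1 / t : ℝ) : ℂ)) - diagonal (fun i => (((t + ev i : ℝ) : ℂ))⁻¹) :=
        (diagonal_sub _ _).symm
      rw [resolventGap, hAinv, hconst (1 / t), hdsub, mul_sub, sub_mul]
    show t ^ β • resolventGap t X = _
    rw [hgap, real_smul_matrix, ← smul_mul_assoc, ← mul_smul_comm, ← diagonal_smul,
      conj_diag_sum]
    refine Finset.sum_congr rfl fun i _ => ?_
    congr 1
    simp only [Pi.smul_apply, smul_eq_mul, hsdef]
    push_cast
    ring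
  have hsInt : ∀ i : Fin n, MeasureTheory.IntegrableOn (s i) (Set.Ioi T) :=
    fun i => aux_integrable hT hβ1 (hev0 i)
  letI : ContinuousENorm (Matrix (Fin n) (Fin n) ℂ) := SeminormedAddGroup.toContinuousENorm
  have hcInt : ∀ i : Fin n,
      MeasureTheory.IntegrableOn (fun t => ((s i t : ℝ) : ℂ) • E i) (Set.Ioi T) :=
    fun i => ((hsInt i).ofReal).smul_const (E i)
  have hIeq : (∫ t in Set.Ioi T, t ^ β • resolventGap t X)
      = ∑ i, ((∫ t in Set.Ioi T, s i t : ℝ) : ℂ) • E i := by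
    rw [MeasureTheory.setIntegral_congr_fun measurableSet_Ioi key,
      MeasureTheory.integral_finset_sum _ fun i _ => hcInt i]
    refine Finset.sum_congr rfl fun i _ => ?_
    rw [integral_smul_const]
    exact congrArg (· • E i) integral_ofReal
  rw [hIeq]
  have hrle : ∀ i, (∫ t in Set.Ioi T, s i t) ≤ K / ((1 - β) * T ^ (1 - β)) :=
    fun i => aux_integral_le hT hβ0 hβ1 (hev0 i) (hevK i)
  have hfin : (K / ((1 - β) * T ^ (1 - β))) • (1 : Matrix (Fin n) (Fin n) ℂ)
        - ∑ i, ((∫ t in Set.Ioi T, s i t : ℝ) : ℂ) • E i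
      = U * diagonal (fun i =>
          ((K / ((1 - β) * T ^ (1 - β)) - ∫ t in Set.Ioi T, s i t : ℝ) : ℂ)) * star U := by
    rw [hconst, conj_diag_sum, conj_diag_sum, ← Finset.sum_sub_distrib]
    refine Finset.sum_congr rfl fun i _ => ?_
    rw [← sub_smul]
    congr 1
    push_cast
    ring
  rw [hfin]
  have hdiagPSD : (diagonal (fun i =>
      ((K / ((1 - β) * T ^ (1 - β)) - ∫ t in Set.Ioi T, s i t : ℝ) : ℂ)) :
        Matrix (Fin n) (Fin n) ℂ).PosSemidef := by
    rw [posSemidef_diagonal_iff]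
    intro i
    rw [Complex.zero_le_real]
    linarith [hrle i]
  have hfinal := hdiagPSD.mul_mul_conjTranspose_same U
  simpa [Matrix.star_eq_conjTranspose] using hfinal
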